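/- Fix demands Q : W → ℝ with Q_ij > 0 for all ij ∈ W, and let Λ₀ be the set of path-flow vectors h with ∑_{p : w(p)=ij} ∫_{t0}^{tf} h_p(t) dt = Q_ij for all ij ∈ W. For h* ∈ Λ₀ define v_p(h*) = essinf{Ψ_p(t, h*) : t ∈ [t0, tf]} and v_ij(h*) = min{v_p(h*) : w(p) = ij}. Then h* ∈ Λ₀ is a dynamic user equilibrium — i.e. for every ij ∈ W and every p with w(p)=ij: for a.e. t ∈ [t0, tf], h*_p(t) > 0 implies Ψ_p(t, h*) = v_ij(h*), and for a.e. t ∈ [t0, tf], Ψ_p(t, h*) ≥ v_ij(h*) — if and only if h* solves the fixed-demand variational inequality: ∑_{p∈P} ∫_{t0}^{tf} Ψ_p(t, h*)(h_p(t) − h*_p(t)) dt ≥ 0 for all h ∈ Λ₀. (Fixed-demand DUE/VI equivalence of Friesz et al. (1993), as stated in Section 2 and used in the proof of Theorem 3.1.) -/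

import Mathlib

open MeasureTheory Set

/-- A path-flow vector: each `h p` is measurable, a.e. nonnegative on `[t0, tf]`,
and square-integrable on `[t0, tf]`. -/
def IsPathFlow {P : Type*} (t0 tf : ℝ) (h : P → ℝ → ℝ) : Prop :=
  ∀ p, Measurable (h p) ∧
    (∀ᵐ t ∂(volume.restrict (Icc t0 tf)), 0 ≤ h p t) ∧
    MemLp (h p) 2 (volume.restrict (Icc t0 tf))

/-- The essential infimum of `g` over `[t0, tf]`:
`sup { x : ℝ | ν{t ∈ [t0, tf] : g t < x} = 0 }`. -/
noncomputable def essinfOn (t0 tf : ℝ) (g : ℝ → ℝ) : ℝ :=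
  sSup {x : ℝ | volume {t ∈ Icc t0 tf | g t < x} = 0}

/-- The minimal essential-infimum effective delay over paths connecting OD pair `ij`:
`v_ij = min { essinf Ψ_p(·, h) : w p = ij }`. -/
noncomputable def vMin {P W : Type*} (t0 tf : ℝ) (w : P → W) (Ψp : P → ℝ → ℝ)
    (ij : W) : ℝ :=
  sInf {x : ℝ | ∃ p, w p = ij ∧ essinfOn t0 tf (Ψp p) = x}


lemma integrable_mul_L2 {μ : Measure ℝ} {f g : ℝ → ℝ} (hf : MemLp f 2 μ) (hg : MemLp g 2 μ) :
    Integrable (fun t => f t * g t) μ := by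
  have h : MemLp (f • g) 1 μ := hg.smul hf
  rw [← memLp_one_iff_integrable]
  exact h

section ess
variable {t0 tf : ℝ} {g : ℝ → ℝ}

lemma sep_eq_inter (t0 tf : ℝ) (g : ℝ → ℝ) (x : ℝ) :
    {t ∈ Icc t0 tf | g t < x} = {t | g t < x} ∩ Icc t0 tf := by
  ext t; simp [Set.mem_sep_iff, and_comm]

lemma essS_eq (hg : Measurable g) (x : ℝ) :
    volume {t ∈ Icc t0 tf | g t < x} = (volume.restrict (Icc t0 tf)) {t | g t < x} := by
  have h2 : (volume.restrict (Icc t0 tf)) {t | g t < x} = volume ({t | g t < x} ∩ Icc t0 tf) :=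
    Measure.restrict_apply (hg measurableSet_Iio)
  rw [h2, sep_eq_inter]

lemma essS_zero_mem (hpos : ∀ t ∈ Icc t0 tf, 0 < g t) :
    (0:ℝ) ∈ {x : ℝ | volume {t ∈ Icc t0 tf | g t < x} = 0} := by
  have : {t ∈ Icc t0 tf | g t < 0} = ∅ := by
    ext t; simp only [Set.mem_sep_iff, Set.mem_empty_iff_false, iff_false, not_and, not_lt]
    exact fun htm => (hpos t htm).le
  rw [Set.mem_setOf_eq, this, measure_empty]

lemma essS_bddAbove (ht : t0 < tf) (hg : Measurable g) :
    BddAbove {x : ℝ | volume {t ∈ Icc t0 tf | g t < x} = 0} := by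
  set μ := volume.restrict (Icc t0 tf)
  have hU : (⋃ n : ℕ, {t : ℝ | g t < n}) = Set.univ := by
    ext t; simp only [Set.mem_iUnion, Set.mem_setOf_eq, Set.mem_univ, iff_true]
    obtain ⟨n, hn⟩ := exists_nat_gt (g t); exact ⟨n, hn⟩
  have hμuniv : μ Set.univ ≠ 0 := by
    simp only [μ, Measure.restrict_apply_univ]
    rw [Real.volume_Icc]
    simp only [ne_eq, ENNReal.ofReal_eq_zero, not_le]
    linarith
  obtain ⟨n, hn⟩ : ∃ n : ℕ, μ {t : ℝ | g t < n} ≠ 0 := by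
    by_contra hc
    push_neg at hc
    apply hμuniv
    rw [← hU]
    exact measure_iUnion_null fun n => hc n
  refine ⟨n, fun x hx => ?_⟩
  by_contra hlt
  push_neg at hlt
  apply hn
  have hsub : {t : ℝ | g t < n} ⊆ {t | g t < x} := fun t htt => lt_trans htt hlt
  have hx' : μ {t | g t < x} = 0 := by rw [← essS_eq hg]; exact hx
  exact measure_mono_null hsub hx'

lemma essinfOn_le_ae (ht : t0 < tf) (hg : Measurable g) (hpos : ∀ t ∈ Icc t0 tf, 0 < g t) :
    ∀ᵐ t ∂(volume.restrict (Icc t0 tf)), essinfOn t0 tf g ≤ g t := by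
  set μ := volume.restrict (Icc t0 tf)
  set S := {x : ℝ | volume {t ∈ Icc t0 tf | g t < x} = 0} with hS
  set m := essinfOn t0 tf g with hm
  have hSne : S.Nonempty := ⟨0, essS_zero_mem hpos⟩
  have hSbdd := essS_bddAbove ht hg
  have hkey : μ {t | g t < m} = 0 := by
    have hUeq : {t : ℝ | g t < m} = ⋃ n : ℕ, {t | g t < m - 1/(n+1)} := by
      ext t
      simp only [Set.mem_iUnion, Set.mem_setOf_eq]
      constructor
      · intro hlt
        obtain ⟨n, hn⟩ := exists_nat_one_div_lt (sub_pos.mpr hlt)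
        exact ⟨n, by linarith⟩
      · rintro ⟨n, hn⟩
        have : (0:ℝ) < 1/(n+1) := by positivity
        linarith
    rw [hUeq]
    refine measure_iUnion_null fun n => ?_
    have hlt : m - 1/(n+1) < m := by
      have : (0:ℝ) < 1/(n+1) := by positivity
      linarith
    obtain ⟨x, hxS, hx⟩ := exists_lt_of_lt_csSup hSne hlt
    have hx0 : μ {t | g t < x} = 0 := by rw [← essS_eq hg]; exact hxS
    exact measure_mono_null (fun t htt => lt_trans htt hx) hx0
  rw [ae_iff]
  convert hkey using 2
  ext t; simp

lemma essinfOn_near (ht : t0 < tf) (hg : Measurable g) {ε : ℝ} (hε : 0 < ε) :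
    (volume.restrict (Icc t0 tf)) {t | g t < essinfOn t0 tf g + ε} ≠ 0 := by
  intro hc
  have hmem : essinfOn t0 tf g + ε ∈ {x : ℝ | volume {t ∈ Icc t0 tf | g t < x} = 0} := by
    rw [Set.mem_setOf_eq, essS_eq hg]; exact hc
  have := le_csSup (essS_bddAbove ht hg) hmem
  rw [essinfOn] at this
  -- `essinfOn t0 tf g + ε ≤ sSup S = essinfOn t0 tf g`
  have : essinfOn t0 tf g + ε ≤ essinfOn t0 tf g := this
  linarith

end ess

section vmin
variable {P W : Type*} [Fintype P] (t0 tf : ℝ) (w : P → W) (Ψp : P → ℝ → ℝ)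

lemma vMin_set_eq (ij : W) : {x : ℝ | ∃ p, w p = ij ∧ essinfOn t0 tf (Ψp p) = x}
    = (fun p => essinfOn t0 tf (Ψp p)) '' {p | w p = ij} := by
  ext x
  simp [Set.mem_image, Set.mem_setOf_eq]

lemma vMin_finite (ij : W) :
    Set.Finite {x : ℝ | ∃ p, w p = ij ∧ essinfOn t0 tf (Ψp p) = x} := by
  rw [vMin_set_eq]
  exact (Set.toFinite _).image _

lemma vMin_le (p : P) : vMin t0 tf w Ψp (w p) ≤ essinfOn t0 tf (Ψp p) :=
  csInf_le (vMin_finite t0 tf w Ψp (w p)).bddBelow ⟨p, rfl, rfl⟩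

lemma vMin_attained (ij : W) (hne : ∃ p, w p = ij) :
    ∃ q, w q = ij ∧ essinfOn t0 tf (Ψp q) = vMin t0 tf w Ψp ij := by
  obtain ⟨p, hp⟩ := hne
  have : vMin t0 tf w Ψp ij ∈ {x : ℝ | ∃ p, w p = ij ∧ essinfOn t0 tf (Ψp p) = x} :=
    Set.Nonempty.csInf_mem ⟨_, p, hp, rfl⟩ (vMin_finite t0 tf w Ψp ij)
  obtain ⟨q, hq1, hq2⟩ := this
  exact ⟨q, hq1, hq2⟩

end vmin

/-- **Fixed-demand DUE/VI equivalence (Friesz et al., 1993)**: with fixed positive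
demands `Q`, a feasible path-flow vector `h*` is a dynamic user equilibrium if and
only if it solves the fixed-demand variational inequality. -/
theorem fixed_demand_due_iff_vi {P W : Type*} [Fintype P] [Nonempty P] [Fintype W]
    [DecidableEq W]
    (t0 tf : ℝ) (ht : t0 < tf) (w : P → W) (hw : Function.Surjective w)
    (Ψ : (P → ℝ → ℝ) → P → ℝ → ℝ)
    (hΨ : ∀ h : P → ℝ → ℝ, IsPathFlow t0 tf h → ∀ p,
      Measurable (Ψ h p) ∧ (∀ t ∈ Icc t0 tf, 0 < Ψ h p t) ∧
      MemLp (Ψ h p) 2 (volume.restrict (Icc t0 tf)))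
    (Q : W → ℝ) (hQ : ∀ ij, 0 < Q ij)
    (hstar : P → ℝ → ℝ) (hflow : IsPathFlow t0 tf hstar)
    (hdem : ∀ ij, (∑ p ∈ Finset.univ.filter (fun p => w p = ij),
      ∫ t in Icc t0 tf, hstar p t) = Q ij) :
    ((∀ p, (∀ᵐ t ∂(volume.restrict (Icc t0 tf)),
        0 < hstar p t → Ψ hstar p t = vMin t0 tf w (Ψ hstar) (w p)) ∧
      (∀ᵐ t ∂(volume.restrict (Icc t0 tf)),
        vMin t0 tf w (Ψ hstar) (w p) ≤ Ψ hstar p t)) ↔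
      (∀ h : P → ℝ → ℝ, IsPathFlow t0 tf h →
        (∀ ij, (∑ p ∈ Finset.univ.filter (fun p => w p = ij),
          ∫ t in Icc t0 tf, h p t) = Q ij) →
        0 ≤ ∑ p, ∫ t in Icc t0 tf, Ψ hstar p t * (h p t - hstar p t))) := by
  set μ := volume.restrict (Icc t0 tf) with hμdef
  haveI : IsFiniteMeasure μ :=
    ⟨by rw [hμdef, Measure.restrict_apply_univ]; exact measure_Icc_lt_top⟩
  have hΨ' := hΨ hstar hflow
  have hint_hs : ∀ p, Integrable (hstar p) μ := fun p => ((hflow p).2.2).integrable one_le_two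
  have hint_Ψ : ∀ p, Integrable (Ψ hstar p) μ := fun p => ((hΨ' p).2.2).integrable one_le_two
  set v : P → ℝ := fun p => vMin t0 tf w (Ψ hstar) (w p) with hvdef
  constructor
  · -- DUE → VI
    intro hDUE h hhf hhd
    have hint_h : ∀ p, Integrable (h p) μ := fun p => ((hhf p).2.2).integrable one_le_two
    have hL2diff : ∀ p, MemLp (fun t => h p t - hstar p t) 2 μ := fun p =>
      ((hhf p).2.2).sub ((hflow p).2.2)
    have hL2Ψv : ∀ p, MemLp (fun t => Ψ hstar p t - v p) 2 μ := fun p =>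
      ((hΨ' p).2.2).sub (memLp_const _)
    have key : ∀ p, (∫ t in Icc t0 tf, Ψ hstar p t * (h p t - hstar p t))
        = (∫ t in Icc t0 tf, (Ψ hstar p t - v p) * (h p t - hstar p t))
          + v p * ((∫ t in Icc t0 tf, h p t) - ∫ t in Icc t0 tf, hstar p t) := by
      intro p
      have h1 : Integrable (fun t => (Ψ hstar p t - v p) * (h p t - hstar p t)) μ :=
        integrable_mul_L2 (hL2Ψv p) (hL2diff p)
      have h2 : Integrable (fun t => v p * (h p t - hstar p t)) μ :=
        ((hint_h p).sub (hint_hs p)).const_mul _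
      have heq : (fun t => Ψ hstar p t * (h p t - hstar p t))
          = fun t => (Ψ hstar p t - v p) * (h p t - hstar p t)
            + v p * (h p t - hstar p t) := by
        funext t; ring
      rw [show (∫ t in Icc t0 tf, Ψ hstar p t * (h p t - hstar p t))
          = ∫ t, ((Ψ hstar p t - v p) * (h p t - hstar p t)
            + v p * (h p t - hstar p t)) ∂μ by rw [← heq],
        integral_add h1 h2, integral_const_mul,
        integral_sub (hint_h p) (hint_hs p)]
    have hfirst : ∀ p, 0 ≤ ∫ t in Icc t0 tf, (Ψ hstar p t - v p) * (h p t - hstar p t) := by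
      intro p
      have hsplit : (∫ t in Icc t0 tf, (Ψ hstar p t - v p) * (h p t - hstar p t))
          = (∫ t in Icc t0 tf, (Ψ hstar p t - v p) * h p t)
            - ∫ t in Icc t0 tf, (Ψ hstar p t - v p) * hstar p t := by
        rw [← integral_sub (integrable_mul_L2 (hL2Ψv p) (hhf p).2.2)
          (integrable_mul_L2 (hL2Ψv p) (hflow p).2.2)]
        congr 1; funext t; ring
      have hA : 0 ≤ ∫ t in Icc t0 tf, (Ψ hstar p t - v p) * h p t := by
        refine integral_nonneg_of_ae ?_
        filter_upwards [(hDUE p).2, (hhf p).2.1] with t h1 h2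
        exact mul_nonneg (sub_nonneg.mpr h1) h2
      have hB : (∫ t in Icc t0 tf, (Ψ hstar p t - v p) * hstar p t) = 0 := by
        refine integral_eq_zero_of_ae ?_
        filter_upwards [(hDUE p).1, (hflow p).2.1] with t h1 h2
        rcases h2.eq_or_lt with h3 | h3
        · simp [Pi.zero_apply, ← h3]
        · simp [Pi.zero_apply, h1 h3, hvdef]
      rw [hsplit, hB, sub_zero]; exact hA
    have hsecond : ∑ p, v p * ((∫ t in Icc t0 tf, h p t) - ∫ t in Icc t0 tf, hstar p t) = 0 := by
      rw [← Finset.sum_fiberwise Finset.univ w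
        (fun p => v p * ((∫ t in Icc t0 tf, h p t) - ∫ t in Icc t0 tf, hstar p t))]
      refine Finset.sum_eq_zero fun ij _ => ?_
      have hinner : ∀ p ∈ Finset.univ.filter (fun p => w p = ij),
          v p * ((∫ t in Icc t0 tf, h p t) - ∫ t in Icc t0 tf, hstar p t)
          = vMin t0 tf w (Ψ hstar) ij * ((∫ t in Icc t0 tf, h p t) - ∫ t in Icc t0 tf, hstar p t) := by
        intro p hp
        rw [Finset.mem_filter] at hp
        rw [hvdef]
        simp only
        rw [hp.2]
      rw [Finset.sum_congr rfl hinner, ← Finset.mul_sum, Finset.sum_sub_distrib,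
        hhd ij, hdem ij, sub_self, mul_zero]
    calc (0:ℝ) ≤ ∑ p, ∫ t in Icc t0 tf, (Ψ hstar p t - v p) * (h p t - hstar p t) :=
          Finset.sum_nonneg fun p _ => hfirst p
      _ = ∑ p, (∫ t in Icc t0 tf, (Ψ hstar p t - v p) * (h p t - hstar p t))
            + ∑ p, v p * ((∫ t in Icc t0 tf, h p t) - ∫ t in Icc t0 tf, hstar p t) := by
          rw [hsecond, add_zero]
      _ = ∑ p, ∫ t in Icc t0 tf, Ψ hstar p t * (h p t - hstar p t) := by
          rw [← Finset.sum_add_distrib]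
          exact Finset.sum_congr rfl fun p _ => (key p).symm
  · -- VI → DUE
    intro hVI p0
    classical
    have cond2 : ∀ p : P, ∀ᵐ t ∂μ, vMin t0 tf w (Ψ hstar) (w p) ≤ Ψ hstar p t := by
      intro p
      filter_upwards [essinfOn_le_ae ht (hΨ' p).1 (hΨ' p).2.1] with t htt
      exact le_trans (vMin_le t0 tf w (Ψ hstar) p) htt
    refine ⟨?_, cond2 p0⟩
    by_contra hcon
    obtain ⟨q, hq, hqv⟩ := vMin_attained t0 tf w (Ψ hstar) (w p0) ⟨p0, rfl⟩
    have hE : μ {t | 0 < hstar p0 t ∧ v p0 < Ψ hstar p0 t} ≠ 0 := by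
      intro h0
      apply hcon
      filter_upwards [cond2 p0, measure_eq_zero_iff_ae_notMem.mp h0] with t h1 h2 h3
      by_contra hne
      exact h2 ⟨h3, lt_of_le_of_ne h1 (Ne.symm hne)⟩
    have hdecomp : {t | 0 < hstar p0 t ∧ v p0 < Ψ hstar p0 t}
        = ⋃ n : ℕ, {t | 1/(n+1) ≤ hstar p0 t ∧ v p0 + 1/(n+1) ≤ Ψ hstar p0 t} := by
      ext t
      simp only [Set.mem_iUnion, Set.mem_setOf_eq]
      constructor
      · rintro ⟨h1, h2⟩
        obtain ⟨n, hn⟩ := exists_nat_one_div_lt (lt_min h1 (sub_pos.mpr h2))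
        have ha := hn.le.trans (min_le_left _ _)
        have hb := hn.le.trans (min_le_right _ _)
        exact ⟨n, ha, by linarith⟩
      · rintro ⟨n, h1, h2⟩
        have hpos : (0:ℝ) < 1/(n+1) := by positivity
        exact ⟨lt_of_lt_of_le hpos h1, by linarith⟩
    obtain ⟨n, hn⟩ : ∃ n : ℕ, μ {t | 1/(n+1) ≤ hstar p0 t ∧ v p0 + 1/(n+1) ≤ Ψ hstar p0 t} ≠ 0 := by
      by_contra hc
      push_neg at hc
      exact hE (by rw [hdecomp]; exact measure_iUnion_null hc)
    set r : ℝ := 1/(n+1) with hrdef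
    have hr0 : 0 < r := by rw [hrdef]; positivity
    set A : Set ℝ := {t | r ≤ hstar p0 t ∧ v p0 + r ≤ Ψ hstar p0 t} with hAdef
    have hAmeas : MeasurableSet A := by
      rw [hAdef, Set.setOf_and]
      exact (measurableSet_le measurable_const (hflow p0).1).inter
        (measurableSet_le measurable_const (hΨ' p0).1)
    have hAfin : μ A ≠ ⊤ := measure_ne_top μ A
    set δ : ℝ := ∫ t in A, hstar p0 t ∂μ with hδdef
    have hδpos : 0 < δ := by
      have h1 : (∫ t in A, r ∂μ) ≤ δ :=
        setIntegral_mono_on (integrableOn_const hAfin)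
          ((hint_hs p0).integrableOn) hAmeas (fun t htt => htt.1)
      have h2 : (∫ t in A, r ∂μ) = (μ A).toReal * r := by
        rw [setIntegral_const, smul_eq_mul, measureReal_def]
      have h3 : 0 < (μ A).toReal := ENNReal.toReal_pos hn hAfin
      nlinarith
    set B : Set ℝ := {t | Ψ hstar q t < v p0 + r/2} with hBdef
    have hBmeas : MeasurableSet B := measurableSet_lt (hΨ' q).1 measurable_const
    have hBne : μ B ≠ 0 := by
      have h1 := essinfOn_near (g := Ψ hstar q) ht (hΨ' q).1 (show (0:ℝ) < r/2 by linarith)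
      rw [hqv] at h1
      exact h1
    have hBfin : μ B ≠ ⊤ := measure_ne_top μ B
    have hBtr : 0 < (μ B).toReal := ENNReal.toReal_pos hBne hBfin
    set c : ℝ := δ / (μ B).toReal with hcdef
    have hc0 : 0 < c := div_pos hδpos hBtr
    set e1 : ℝ → ℝ := B.indicator (fun _ => c) with he1def
    set e2 : ℝ → ℝ := A.indicator (hstar p0) with he2def
    have hL2e1 : MemLp e1 2 μ := memLp_indicator_const 2 hBmeas c (Or.inr hBfin)
    have hL2e2 : MemLp e2 2 μ := MemLp.indicator hAmeas (hflow p0).2.2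
    have hint_e1 : Integrable e1 μ := hL2e1.integrable one_le_two
    have hint_e2 : Integrable e2 μ := hL2e2.integrable one_le_two
    have hIB : (∫ t, e1 t ∂μ) = δ := by
      rw [he1def]
      rw [integral_indicator hBmeas, setIntegral_const, smul_eq_mul, measureReal_def, hcdef]
      field_simp
    have hIA : (∫ t, e2 t ∂μ) = δ := by
      rw [he2def, integral_indicator hAmeas]
    set h : P → ℝ → ℝ := fun p t => hstar p t
      + ((if p = q then e1 t else 0) - (if p = p0 then e2 t else 0)) with hhdef
    have hd_meas : ∀ p, Measurable (fun t => (if p = q then e1 t else 0)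
        - (if p = p0 then e2 t else 0)) := by
      intro p
      apply Measurable.sub
      · by_cases hpq : p = q
        · simpa [hpq] using (measurable_const.indicator hBmeas :
            Measurable (B.indicator (fun _ => c)))
        · simpa [hpq] using (measurable_const : Measurable (fun _ : ℝ => (0:ℝ)))
      · by_cases hpp : p = p0
        · simpa [hpp] using ((hflow p0).1.indicator hAmeas :
            Measurable (A.indicator (hstar p0)))
        · simpa [hpp] using (measurable_const : Measurable (fun _ : ℝ => (0:ℝ)))
    have hd_L2 : ∀ p, MemLp (fun t => (if p = q then e1 t else 0)
        - (if p = p0 then e2 t else 0)) 2 μ := by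
      intro p
      apply MemLp.sub
      · by_cases hpq : p = q
        · simpa [hpq] using hL2e1
        · simpa [hpq] using (zero_memLp : MemLp (fun _ : ℝ => (0:ℝ)) 2 μ)
      · by_cases hpp : p = p0
        · simpa [hpp] using hL2e2
        · simpa [hpp] using (zero_memLp : MemLp (fun _ : ℝ => (0:ℝ)) 2 μ)
    have hd_int : ∀ p, Integrable (fun t => (if p = q then e1 t else 0)
        - (if p = p0 then e2 t else 0)) μ := fun p => (hd_L2 p).integrable one_le_two
    have hpf : IsPathFlow t0 tf h := by
      intro p
      refine ⟨(hflow p).1.add (hd_meas p), ?_, ?_⟩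
      · filter_upwards [(hflow p).2.1] with t ht0
        have hadd : 0 ≤ (if p = q then e1 t else 0) := by
          split
          · exact Set.indicator_nonneg (fun _ _ => hc0.le) t
          · exact le_refl 0
        have hsub : (if p = p0 then e2 t else 0) ≤ hstar p t := by
          split
          · rename_i hpp
            subst hpp
            by_cases htA : t ∈ A
            · rw [he2def, Set.indicator_of_mem htA]
            · rw [he2def, Set.indicator_of_notMem htA]; exact ht0
          · exact ht0
        show 0 ≤ hstar p t + ((if p = q then e1 t else 0) - (if p = p0 then e2 t else 0))
        linarith
      · exact ((hflow p).2.2).add (hd_L2 p)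
    have hd_integral : ∀ p, (∫ t, ((if p = q then e1 t else 0)
        - (if p = p0 then e2 t else 0)) ∂μ)
        = (if p = q then δ else 0) - (if p = p0 then δ else 0) := by
      intro p
      rcases eq_or_ne p q with hpq | hpq <;> rcases eq_or_ne p p0 with hpp | hpp
      · have hqp0 : q = p0 := hpq.symm.trans hpp
        simp only [hpq, hqp0, eq_self_iff_true, if_true]
        rw [integral_sub hint_e1 hint_e2, hIB, hIA]
      · have hqp0 : ¬ q = p0 := fun e => hpp (hpq.trans e)
        simp only [hpq, eq_self_iff_true, if_true, if_neg hqp0, sub_zero]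
        exact hIB
      · have hp0q : ¬ p0 = q := fun e => hpq (hpp.trans e)
        simp only [hpp, eq_self_iff_true, if_true, if_neg hp0q, zero_sub]
        rw [integral_neg, hIA]
      · simp only [if_neg hpq, if_neg hpp, sub_zero]
        simp
    have hdem' : ∀ ij, (∑ p ∈ Finset.univ.filter (fun p => w p = ij),
        ∫ t in Icc t0 tf, h p t) = Q ij := by
      intro ij
      have hsplit : ∀ p, (∫ t in Icc t0 tf, h p t)
          = (∫ t in Icc t0 tf, hstar p t)
            + ((if p = q then δ else 0) - (if p = p0 then δ else 0)) := by
        intro p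
        have harg : (fun t => h p t) = fun t => hstar p t
            + ((if p = q then e1 t else 0) - (if p = p0 then e2 t else 0)) := rfl
        rw [show (∫ t in Icc t0 tf, h p t) = ∫ t, (hstar p t
            + ((if p = q then e1 t else 0) - (if p = p0 then e2 t else 0))) ∂μ from by rw [← harg],
          integral_add (hint_hs p) (hd_int p), hd_integral p]
      rw [Finset.sum_congr rfl (fun p _ => hsplit p), Finset.sum_add_distrib, hdem ij,
        Finset.sum_sub_distrib, Finset.sum_ite_eq' _ q (fun _ => δ),
        Finset.sum_ite_eq' _ p0 (fun _ => δ)]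
      have hmemq : (q ∈ Finset.univ.filter (fun p => w p = ij)) ↔ (w p0 = ij) := by
        simp [Finset.mem_filter, hq]
      have hmemp : (p0 ∈ Finset.univ.filter (fun p => w p = ij)) ↔ (w p0 = ij) := by
        simp [Finset.mem_filter]
      by_cases hwij : w p0 = ij
      · rw [if_pos (hmemq.mpr hwij), if_pos (hmemp.mpr hwij)]; ring
      · rw [if_neg (fun hmem => hwij (hmemq.mp hmem)),
          if_neg (fun hmem => hwij (hmemp.mp hmem))]
        ring
    have hVIval := hVI h hpf hdem'
    have hint_Ψe1 : ∀ p, Integrable (fun t => Ψ hstar p t * e1 t) μ := fun p =>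
      integrable_mul_L2 (hΨ' p).2.2 hL2e1
    have hint_Ψe2 : ∀ p, Integrable (fun t => Ψ hstar p t * e2 t) μ := fun p =>
      integrable_mul_L2 (hΨ' p).2.2 hL2e2
    have hterm : ∀ p, (∫ t in Icc t0 tf, Ψ hstar p t * (h p t - hstar p t))
        = (if p = q then ∫ t in Icc t0 tf, Ψ hstar p t * e1 t else 0)
          - (if p = p0 then ∫ t in Icc t0 tf, Ψ hstar p t * e2 t else 0) := by
      intro p
      have hrw : (∫ t in Icc t0 tf, Ψ hstar p t * (h p t - hstar p t))
          = ∫ t, (Ψ hstar p t * ((if p = q then e1 t else 0)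
            - (if p = p0 then e2 t else 0))) ∂μ := by
        congr 1
        funext t
        have : h p t - hstar p t
            = (if p = q then e1 t else 0) - (if p = p0 then e2 t else 0) := by
          show (hstar p t + ((if p = q then e1 t else 0) - (if p = p0 then e2 t else 0)))
            - hstar p t = _
          ring
        rw [this]
      rw [hrw]
      rcases eq_or_ne p q with hpq | hpq <;> rcases eq_or_ne p p0 with hpp | hpp
      · have hqp0 : q = p0 := hpq.symm.trans hpp
        simp only [hpq, hqp0, eq_self_iff_true, if_true, mul_sub]
        exact integral_sub (hint_Ψe1 p0) (hint_Ψe2 p0)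
      · have hqp0 : ¬ q = p0 := fun e => hpp (hpq.trans e)
        simp only [hpq, eq_self_iff_true, if_true, if_neg hqp0, mul_zero, sub_zero]
        rfl
      · have hp0q : ¬ p0 = q := fun e => hpq (hpp.trans e)
        simp only [hpp, eq_self_iff_true, if_true, if_neg hp0q, mul_zero, zero_sub, mul_neg]
        exact integral_neg _
      · simp only [if_neg hpq, if_neg hpp, sub_zero, mul_zero, sub_self]
        simp
    have hsum : (∑ p, ∫ t in Icc t0 tf, Ψ hstar p t * (h p t - hstar p t))
        = (∫ t in Icc t0 tf, Ψ hstar q t * e1 t)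
          - (∫ t in Icc t0 tf, Ψ hstar p0 t * e2 t) := by
      rw [Finset.sum_congr rfl (fun p _ => hterm p), Finset.sum_sub_distrib,
        Finset.sum_ite_eq' _ q (fun p => ∫ t in Icc t0 tf, Ψ hstar p t * e1 t),
        Finset.sum_ite_eq' _ p0 (fun p => ∫ t in Icc t0 tf, Ψ hstar p t * e2 t),
        if_pos (Finset.mem_univ q), if_pos (Finset.mem_univ p0)]
    have hIq : (∫ t in Icc t0 tf, Ψ hstar q t * e1 t) ≤ (v p0 + r/2) * δ := by
      have h1 : (fun t => Ψ hstar q t * e1 t)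
          = B.indicator (fun t => Ψ hstar q t * c) := by
        funext t
        rw [he1def, ← Set.indicator_mul_right]
      rw [show (∫ t in Icc t0 tf, Ψ hstar q t * e1 t)
          = ∫ t, B.indicator (fun t => Ψ hstar q t * c) t ∂μ from by rw [← h1],
        integral_indicator hBmeas]
      have h2 : (∫ t in B, Ψ hstar q t * c ∂μ) ≤ ∫ t in B, (v p0 + r/2) * c ∂μ := by
        refine setIntegral_mono_on ((hint_Ψ q).mul_const c).integrableOn
          (integrableOn_const hBfin) hBmeas ?_
        intro t htt
        have hlt : Ψ hstar q t < v p0 + r/2 := htt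
        exact mul_le_mul_of_nonneg_right hlt.le hc0.le
      have h3 : (∫ t in B, (v p0 + r/2) * c ∂μ) = (v p0 + r/2) * δ := by
        rw [setIntegral_const, smul_eq_mul, measureReal_def, hcdef]
        field_simp
      linarith
    have hIp : (v p0 + r) * δ ≤ ∫ t in Icc t0 tf, Ψ hstar p0 t * e2 t := by
      have h1 : (fun t => Ψ hstar p0 t * e2 t)
          = A.indicator (fun t => Ψ hstar p0 t * hstar p0 t) := by
        funext t
        rw [he2def, ← Set.indicator_mul_right]
      rw [show (∫ t in Icc t0 tf, Ψ hstar p0 t * e2 t)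
          = ∫ t, A.indicator (fun t => Ψ hstar p0 t * hstar p0 t) t ∂μ from by rw [← h1],
        integral_indicator hAmeas]
      have h2 : (∫ t in A, (v p0 + r) * hstar p0 t ∂μ) = (v p0 + r) * δ := by
        rw [hδdef, integral_const_mul]
      rw [← h2]
      refine setIntegral_mono_on (((hint_hs p0).const_mul _).integrableOn)
        ((integrable_mul_L2 (hΨ' p0).2.2 (hflow p0).2.2).integrableOn) hAmeas ?_
      intro t htt
      have h3 : 0 ≤ hstar p0 t := le_trans hr0.le htt.1
      exact mul_le_mul_of_nonneg_right htt.2 h3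
    have hVIval' : (0:ℝ) ≤ ∑ p, ∫ t in Icc t0 tf, Ψ hstar p t * (h p t - hstar p t) := hVIval
    rw [hsum] at hVIval'
    nlinarith [mul_pos hr0 hδpos]
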